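/- The infinite multiple zeta-star value ζ*(3, {2}^∞) equals 2ζ(2) − 2 = π²/3 − 2. -/

import Mathlib

open scoped BigOperators

/-- The set of weakly decreasing tuples of positive integers of length `r`. -/
def DecTuple (r : ℕ) : Set (Fin r → ℕ) :=
  {f | (∀ i, 1 ≤ f i) ∧ ∀ i j : Fin r, i ≤ j → f j ≤ f i}

/-- The multiple zeta-star value of an index `k`. -/
noncomputable def zetaStar {r : ℕ} (k : Fin r → ℕ) : ℝ :=
  ∑' f : DecTuple r, ∏ i, (((f : Fin r → ℕ) i : ℝ) ^ (k i))⁻¹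

open Finset

/-- weakly decreasing tuples of length r with entries in [1,n] -/
def T (r n : ℕ) : Finset (Fin r → ℕ) :=
  (Fintype.piFinset fun _ => Finset.Icc 1 n).filter
    fun f => ∀ i j : Fin r, i ≤ j → f j ≤ f i

noncomputable def S (r n : ℕ) : ℝ := ∑ f ∈ T r n, ∏ i, (((f i : ℝ)) ^ 2)⁻¹

lemma mem_T {r n : ℕ} {f : Fin r → ℕ} :
    f ∈ T r n ↔ (∀ i, 1 ≤ f i ∧ f i ≤ n) ∧ ∀ i j : Fin r, i ≤ j → f j ≤ f i := by
  simp [T, Fintype.mem_piFinset, Finset.mem_Icc, forall_and]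

lemma S_zero (n : ℕ) : S 0 n = 1 := by
  have : T 0 n = {![]} := by
    ext f
    simp [mem_T, Subsingleton.elim f ![]]
  simp [S, this]

lemma S_succ (r n : ℕ) :
    S (r + 1) n = ∑ m ∈ Finset.Icc 1 n, ((m : ℝ) ^ 2)⁻¹ * S r m := by
  have key : ∑ f ∈ T (r+1) n, ∏ i, (((f i : ℝ)) ^ 2)⁻¹ =
      ∑ x ∈ (Finset.Icc 1 n).sigma (fun m => T r m),
        (((x.1 : ℝ)) ^ 2)⁻¹ * ∏ i, (((x.2 i : ℝ)) ^ 2)⁻¹ := by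
    refine Finset.sum_nbij'
      (fun f : Fin (r+1) → ℕ => (⟨f 0, Fin.tail f⟩ : Σ _ : ℕ, Fin r → ℕ))
      (fun x : Σ _ : ℕ, Fin r → ℕ => Fin.cons x.1 x.2) ?_ ?_ ?_ ?_ ?_
    · rintro f hf
      rw [mem_T] at hf
      obtain ⟨hb, hd⟩ := hf
      refine Finset.mem_sigma.2 ⟨Finset.mem_Icc.2 ⟨(hb 0).1, (hb 0).2⟩, mem_T.2 ⟨?_, ?_⟩⟩
      · intro i
        exact ⟨(hb i.succ).1, hd 0 i.succ (Fin.zero_le _)⟩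
      · intro i j hij
        exact hd i.succ j.succ (by simpa using hij)
    · rintro ⟨m, g⟩ hx
      rw [Finset.mem_sigma, Finset.mem_Icc, mem_T] at hx
      obtain ⟨⟨hm1, hmn⟩, hb, hd⟩ := hx
      rw [mem_T]
      constructor
      · intro i
        refine Fin.cases ?_ ?_ i
        · simpa using ⟨hm1, hmn⟩
        · intro j
          simp only [Fin.cons_succ]
          exact ⟨(hb j).1, le_trans (hb j).2 hmn⟩
      · intro i j hij
        rcases Fin.eq_zero_or_eq_succ i with rfl | ⟨i', rfl⟩ <;>
          rcases Fin.eq_zero_or_eq_succ j with rfl | ⟨j', rfl⟩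
        · simp
        · simp only [Fin.cons_zero, Fin.cons_succ]
          exact (hb j').2
        · exact absurd hij (by simp [Fin.le_def])
        · simp only [Fin.cons_succ]
          exact hd i' j' (by simpa [Fin.succ_le_succ_iff] using hij)
    · intro f hf
      exact Fin.cons_self_tail f
    · rintro ⟨m, g⟩ hx
      simp
    · rintro f hf
      rw [Fin.prod_univ_succ]
      rfl
  rw [S, key, Finset.sum_sigma]
  simp [S, Finset.mul_sum]

noncomputable def L (n : ℕ) : ℝ := 2 * n / (n + 1)

lemma L_sum : ∀ n : ℕ, ∑ m ∈ Finset.Icc 1 n, ((m : ℝ) ^ 2)⁻¹ * L m = L n := by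
  intro n
  induction n with
  | zero => simp [L]
  | succ n ih =>
    rw [Finset.sum_Icc_succ_top (by omega), ih]
    have h1 : ((n : ℝ) + 1) ≠ 0 := by positivity
    have h2 : ((n : ℝ) + 2) ≠ 0 := by positivity
    simp only [L]
    push_cast
    field_simp
    ring

lemma S_one : ∀ r, S r 1 = 1 := by
  intro r
  induction r with
  | zero => exact S_zero 1
  | succ r ih => rw [S_succ]; simp [ih]

lemma term_nonneg {r : ℕ} (f : Fin r → ℕ) : 0 ≤ ∏ i, (((f i : ℝ)) ^ 2)⁻¹ :=
  Finset.prod_nonneg fun i _ => by positivity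

lemma S_nonneg (r n : ℕ) : 0 ≤ S r n :=
  Finset.sum_nonneg fun f _ => term_nonneg f

lemma q_aux : ∀ n : ℕ, 2 ≤ n → ∑ m ∈ Finset.Icc 3 n, ((m : ℝ) ^ 2)⁻¹ + ((n : ℝ))⁻¹ ≤ 1/2 := by
  intro n hn
  induction n, hn using Nat.le_induction with
  | base => norm_num
  | succ n hn ih =>
    rw [Finset.sum_Icc_succ_top (by omega)]
    have h0 : (0 : ℝ) < n := by exact_mod_cast Nat.lt_of_lt_of_le (by norm_num) hn
    have key : (((n : ℝ) + 1) ^ 2)⁻¹ + ((n : ℝ) + 1)⁻¹ ≤ ((n : ℝ))⁻¹ := by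
      have e1 : (((n:ℝ)+1)^2)⁻¹ + ((n:ℝ)+1)⁻¹ = ((n:ℝ)+2)/(((n:ℝ)+1)^2) := by
        field_simp
        ring
      rw [e1, inv_eq_one_div, div_le_div_iff₀ (by positivity) h0]
      nlinarith
    push_cast
    calc ∑ m ∈ Finset.Icc 3 n, ((m : ℝ) ^ 2)⁻¹ + (((n:ℝ) + 1) ^ 2)⁻¹ + ((n : ℝ) + 1)⁻¹
        ≤ ∑ m ∈ Finset.Icc 3 n, ((m : ℝ) ^ 2)⁻¹ + ((n : ℝ))⁻¹ := by linarith
      _ ≤ 1/2 := ih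

lemma q_bound (n : ℕ) : ∑ m ∈ Finset.Icc 2 n, ((m : ℝ) ^ 2)⁻¹ ≤ 3/4 := by
  rcases le_or_gt n 1 with h | h
  · rw [Finset.Icc_eq_empty (by omega)]; norm_num
  · have h2 : 2 ≤ n := h
    have : Finset.Icc 2 n = insert 2 (Finset.Icc 3 n) := by
      ext m
      simp only [Finset.mem_Icc, Finset.mem_insert]
      omega
    rw [this, Finset.sum_insert (by simp)]
    have := q_aux n h2
    have hn0 : (0:ℝ) < (n:ℝ)⁻¹ := by
      have : (0:ℝ) < n := by exact_mod_cast Nat.lt_of_lt_of_le (by norm_num) h2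
      positivity
    norm_num
    linarith

lemma L_one : L 1 = 1 := by norm_num [L]

lemma gap : ∀ r n, 1 ≤ n → S r n ≤ L n ∧ L n - S r n ≤ (3/4 : ℝ)^r := by
  intro r
  induction r with
  | zero =>
    intro n hn
    have hn1 : (1:ℝ) ≤ (n:ℝ) := by exact_mod_cast hn
    rw [S_zero]
    constructor
    · rw [L, le_div_iff₀ (by positivity)]
      linarith
    · rw [L, pow_zero, sub_le_iff_le_add, div_le_iff₀ (by positivity)]
      linarith
  | succ r ih =>
    intro n hn
    rw [S_succ, ← L_sum n]
    constructor
    · refine Finset.sum_le_sum fun m hm => ?_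
      have hm1 : 1 ≤ m := (Finset.mem_Icc.1 hm).1
      exact mul_le_mul_of_nonneg_left (ih m hm1).1 (by positivity)
    · rw [← Finset.sum_sub_distrib]
      have split : Finset.Icc 1 n = insert 1 (Finset.Icc 2 n) := by
        ext m
        simp only [Finset.mem_Icc, Finset.mem_insert]
        omega
      rw [split, Finset.sum_insert (by simp)]
      simp only [← mul_sub]
      rw [L_one, S_one]
      simp only [sub_self, mul_zero, Nat.cast_one, zero_add]
      calc ∑ m ∈ Finset.Icc 2 n, ((m:ℝ)^2)⁻¹ * (L m - S r m)
          ≤ ∑ m ∈ Finset.Icc 2 n, ((m:ℝ)^2)⁻¹ * (3/4:ℝ)^r := by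
            refine Finset.sum_le_sum fun m hm => ?_
            have hm1 : 1 ≤ m := by have := (Finset.mem_Icc.1 hm).1; omega
            exact mul_le_mul_of_nonneg_left (ih m hm1).2 (by positivity)
        _ = (∑ m ∈ Finset.Icc 2 n, ((m:ℝ)^2)⁻¹) * (3/4:ℝ)^r := by
            rw [Finset.sum_mul]
        _ ≤ (3/4:ℝ) * (3/4:ℝ)^r := by
            exact mul_le_mul_of_nonneg_right (q_bound n) (by positivity)
        _ = (3/4:ℝ)^(r+1) := by ring

def fiberEquiv (s : ℕ) : DecTuple (s+1) ≃ Σ n : ℕ+, {g // g ∈ T s n} where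
  toFun f := ⟨⟨(f : Fin (s+1) → ℕ) 0, f.2.1 0⟩,
    ⟨Fin.tail (f : Fin (s+1) → ℕ), by
      rw [mem_T]
      refine ⟨fun i => ⟨f.2.1 i.succ, f.2.2 0 i.succ (Fin.zero_le _)⟩, fun i j hij => ?_⟩
      exact f.2.2 i.succ j.succ (by simpa using hij)⟩⟩
  invFun x := ⟨Fin.cons (x.1 : ℕ) (x.2 : Fin s → ℕ), by
    have hx := mem_T.1 x.2.2
    constructor
    · intro i
      refine Fin.cases ?_ ?_ i
      · exact x.1.2
      · intro j
        simpa using (hx.1 j).1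
    · intro i j hij
      rcases Fin.eq_zero_or_eq_succ i with rfl | ⟨i', rfl⟩ <;>
        rcases Fin.eq_zero_or_eq_succ j with rfl | ⟨j', rfl⟩
      · simp
      · simp only [Fin.cons_zero, Fin.cons_succ]
        exact (hx.1 j').2
      · exact absurd hij (by simp [Fin.le_def])
      · simp only [Fin.cons_succ]
        exact hx.2 i' j' (by simpa [Fin.succ_le_succ_iff] using hij)⟩
  left_inv f := by
    apply Subtype.ext
    exact Fin.cons_self_tail _
  right_inv x := by
    rcases x with ⟨n, g⟩
    refine Sigma.ext ?_ ?_
    · apply Subtype.ext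
      simp
      rfl
    · apply (Subtype.heq_iff_coe_eq ?_).2
      · simp [Fin.tail_cons]
      · simp

lemma summable_aux (s : ℕ) {C : ℝ} (hC : 0 ≤ C) :
    Summable (fun n : ℕ+ => C * (((n : ℕ) : ℝ) ^ 2)⁻¹) := by
  have h1 : Summable (fun n : ℕ => ((n : ℝ) ^ 2)⁻¹) := by
    simpa using Real.summable_nat_pow_inv.2 (by norm_num : 1 < 2)
  exact ((h1.comp_injective (fun a b h => PNat.coe_injective h)).mul_left C)

lemma S_le_two (s n : ℕ) (hn : 1 ≤ n) : S s n ≤ 2 := by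
  refine le_trans (gap s n hn).1 ?_
  rw [L, div_le_iff₀ (by positivity)]
  push_cast
  linarith [(by exact_mod_cast hn : (1:ℝ) ≤ (n:ℝ))]

lemma cube_le_sq (n : ℕ+) : (((n:ℕ):ℝ)^3)⁻¹ ≤ (((n:ℕ):ℝ)^2)⁻¹ := by
  have h1 : (1:ℝ) ≤ ((n:ℕ):ℝ) := by exact_mod_cast n.2
  apply inv_anti₀ (by positivity)
  nlinarith

lemma outer_bound (s : ℕ) (n : ℕ+) :
    (((n:ℕ):ℝ)^3)⁻¹ * S s n ≤ 2 * (((n:ℕ):ℝ)^2)⁻¹ := by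
  calc (((n:ℕ):ℝ)^3)⁻¹ * S s n ≤ (((n:ℕ):ℝ)^2)⁻¹ * 2 := by
        apply mul_le_mul (cube_le_sq n) (S_le_two s n n.2) (S_nonneg s n) (by positivity)
    _ = 2 * (((n:ℕ):ℝ)^2)⁻¹ := by ring

lemma inner_eq (s : ℕ) (n : ℕ+) :
    ∑' g : {g // g ∈ T s (n:ℕ)}, ((((n:ℕ)):ℝ)^3)⁻¹ * ∏ i, (((g : Fin s → ℕ) i : ℝ)^2)⁻¹
      = (((n:ℕ):ℝ)^3)⁻¹ * S s n := by
  rw [tsum_mul_left, S]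
  congr 1
  exact Finset.tsum_subtype (T s (n:ℕ)) (fun g => ∏ i, (((g i : ℝ))^2)⁻¹)

lemma sigma_summable (s : ℕ) :
    Summable (fun x : Σ n : ℕ+, {g // g ∈ T s (n:ℕ)} =>
      (((x.1:ℕ):ℝ)^3)⁻¹ * ∏ i, (((x.2 : Fin s → ℕ) i : ℝ)^2)⁻¹) := by
  rw [summable_sigma_of_nonneg (fun x => mul_nonneg (by positivity) (term_nonneg _))]
  constructor
  · intro n
    exact (hasSum_fintype _).summable
  · refine Summable.of_nonneg_of_le (fun n => ?_) (fun n => ?_) (summable_aux s (by norm_num : (0:ℝ) ≤ 2))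
    · exact tsum_nonneg fun g => mul_nonneg (by positivity) (term_nonneg _)
    · rw [inner_eq]
      exact outer_bound s n

lemma zetaStar_eq (s : ℕ) :
    zetaStar (fun i : Fin (s+1) => if (i : ℕ) = 0 then 3 else 2)
      = ∑' n : ℕ+, (((n:ℕ):ℝ) ^ 3)⁻¹ * S s (n:ℕ) := by
  rw [zetaStar, ← (fiberEquiv s).symm.tsum_eq]
  have hterm : ∀ x : Σ n : ℕ+, {g // g ∈ T s (n:ℕ)},
      (∏ i, ((((fiberEquiv s).symm x : Fin (s+1) → ℕ) i : ℝ)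
          ^ (if ((i : Fin (s+1)) : ℕ) = 0 then 3 else 2))⁻¹)
        = (((x.1:ℕ):ℝ)^3)⁻¹ * ∏ i, (((x.2 : Fin s → ℕ) i : ℝ)^2)⁻¹ := by
    rintro ⟨n, g⟩
    rw [Fin.prod_univ_succ]
    simp only [fiberEquiv, Equiv.coe_fn_symm_mk, Fin.cons_zero, Fin.cons_succ, Fin.val_succ,
      Fin.val_zero, if_true, Nat.succ_ne_zero, if_false]
  rw [tsum_congr hterm]
  rw [Summable.tsum_sigma' (fun n => (hasSum_fintype _).summable) (sigma_summable s)]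
  exact tsum_congr fun n => inner_eq s n

lemma hasSum_inv_sq_pnat : HasSum (fun n : ℕ+ => (((n:ℕ):ℝ)^2)⁻¹) (Real.pi^2/6) := by
  have h := hasSum_zeta_two
  have hrange : ∀ x ∉ Set.range (fun n : ℕ+ => (n:ℕ)), (1:ℝ) / (x:ℝ)^2 = 0 := by
    intro x hx
    have : x = 0 := by
      by_contra h0
      exact hx ⟨⟨x, Nat.pos_of_ne_zero h0⟩, rfl⟩
    simp [this]
  have := (Function.Injective.hasSum_iff (f := fun n : ℕ => (1:ℝ)/(n:ℝ)^2)
    (fun a b hab => PNat.coe_injective hab) hrange).2 h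
  simpa [Function.comp_def, one_div] using this

lemma hasSum_tele : HasSum (fun n : ℕ+ => (((n:ℕ):ℝ))⁻¹ - ((((n:ℕ):ℝ))+1)⁻¹) 1 := by
  have hnat : HasSum (fun k : ℕ => ((k:ℝ)+1)⁻¹ - ((k:ℝ)+2)⁻¹) 1 := by
    rw [hasSum_iff_tendsto_nat_of_nonneg]
    · have hps : ∀ N : ℕ, ∑ i ∈ Finset.range N, (((i:ℝ)+1)⁻¹ - ((i:ℝ)+2)⁻¹)
          = 1 - ((N:ℝ)+1)⁻¹ := by
        intro N
        have h := Finset.sum_range_sub' (f := fun i : ℕ => ((i:ℝ)+1)⁻¹) N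
        calc ∑ i ∈ Finset.range N, (((i:ℝ)+1)⁻¹ - ((i:ℝ)+2)⁻¹)
            = ∑ i ∈ Finset.range N, ((((i:ℕ):ℝ)+1)⁻¹ - (((i+1:ℕ):ℝ)+1)⁻¹) := by
              refine Finset.sum_congr rfl fun i _ => ?_
              push_cast
              ring_nf
          _ = (((0:ℕ):ℝ)+1)⁻¹ - (((N:ℕ):ℝ)+1)⁻¹ := h
          _ = 1 - ((N:ℝ)+1)⁻¹ := by norm_num
      simp only [hps]
      have : Filter.Tendsto (fun N : ℕ => ((N:ℝ)+1)⁻¹) Filter.atTop (nhds 0) := by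
        simpa [one_div] using tendsto_one_div_add_atTop_nhds_zero_nat (𝕜 := ℝ)
      simpa using Filter.Tendsto.const_sub 1 this
    · intro i
      have h1 : (0:ℝ) < (i:ℝ)+1 := by positivity
      have h2 : (0:ℝ) < (i:ℝ)+2 := by positivity
      have := inv_anti₀ h1 (by linarith : (i:ℝ)+1 ≤ (i:ℝ)+2)
      linarith
  refine (Equiv.pnatEquivNat.symm.hasSum_iff
    (f := fun n : ℕ+ => (((n:ℕ):ℝ))⁻¹ - ((((n:ℕ):ℝ))+1)⁻¹)).1 ?_
  refine HasSum.congr_fun hnat fun x => ?_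
  simp only [Function.comp, Equiv.pnatEquivNat, Nat.succPNat, Equiv.coe_fn_symm_mk, PNat.mk_coe]
  push_cast
  ring_nf

lemma hasSum_target :
    HasSum (fun n : ℕ+ => (((n:ℕ):ℝ)^3)⁻¹ * L (n:ℕ)) (Real.pi^2/3 - 2) := by
  have h := (hasSum_inv_sq_pnat.mul_left 2).sub (hasSum_tele.mul_left 2)
  have hv : 2 * (Real.pi^2/6) - 2 * 1 = Real.pi^2/3 - 2 := by ring
  rw [hv] at h
  refine HasSum.congr_fun h fun n => ?_
  have h1 : (1:ℝ) ≤ ((n:ℕ):ℝ) := by exact_mod_cast n.2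
  have h0 : (0:ℝ) < ((n:ℕ):ℝ) := by linarith
  rw [L]
  field_simp
  ring

lemma summable_zs (s : ℕ) : Summable (fun n : ℕ+ => (((n:ℕ):ℝ)^3)⁻¹ * S s (n:ℕ)) := by
  refine Summable.of_nonneg_of_le (fun n => ?_) (fun n => outer_bound s n)
    (summable_aux s (by norm_num : (0:ℝ) ≤ 2))
  exact mul_nonneg (by positivity) (S_nonneg s _)

lemma zetaStar_sub (s : ℕ) :
    zetaStar (fun i : Fin (s+1) => if (i : ℕ) = 0 then 3 else 2)
      = (Real.pi^2/3 - 2) - ∑' n : ℕ+, (((n:ℕ):ℝ)^3)⁻¹ * (L (n:ℕ) - S s (n:ℕ)) := by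
  rw [zetaStar_eq]
  have key : ∑' n : ℕ+, (((n:ℕ):ℝ)^3)⁻¹ * (L (n:ℕ) - S s (n:ℕ))
      = (∑' n : ℕ+, (((n:ℕ):ℝ)^3)⁻¹ * L (n:ℕ))
        - ∑' n : ℕ+, (((n:ℕ):ℝ)^3)⁻¹ * S s (n:ℕ) := by
    rw [← Summable.tsum_sub hasSum_target.summable (summable_zs s)]
    exact tsum_congr fun n => by ring
  rw [key, hasSum_target.tsum_eq]
  ring

lemma D_bounds (s : ℕ) :
    0 ≤ (∑' n : ℕ+, (((n:ℕ):ℝ)^3)⁻¹ * (L (n:ℕ) - S s (n:ℕ)))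
    ∧ (∑' n : ℕ+, (((n:ℕ):ℝ)^3)⁻¹ * (L (n:ℕ) - S s (n:ℕ))) ≤ 2 * (3/4:ℝ)^s := by
  have hb : ∀ n : ℕ+, (((n:ℕ):ℝ)^3)⁻¹ * (L (n:ℕ) - S s (n:ℕ))
      ≤ ((3/4:ℝ)^s) * (((n:ℕ):ℝ)^2)⁻¹ := by
    intro n
    have hg := gap s n n.2
    calc (((n:ℕ):ℝ)^3)⁻¹ * (L (n:ℕ) - S s (n:ℕ))
        ≤ (((n:ℕ):ℝ)^2)⁻¹ * ((3/4:ℝ)^s) := by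
          apply mul_le_mul (cube_le_sq n) hg.2 (by linarith [hg.1]) (by positivity)
      _ = ((3/4:ℝ)^s) * (((n:ℕ):ℝ)^2)⁻¹ := by ring
  have hnn : ∀ n : ℕ+, 0 ≤ (((n:ℕ):ℝ)^3)⁻¹ * (L (n:ℕ) - S s (n:ℕ)) := by
    intro n
    have hg := gap s n n.2
    exact mul_nonneg (by positivity) (by linarith [hg.1])
  constructor
  · exact tsum_nonneg hnn
  · calc (∑' n : ℕ+, (((n:ℕ):ℝ)^3)⁻¹ * (L (n:ℕ) - S s (n:ℕ)))
        ≤ ∑' n : ℕ+, ((3/4:ℝ)^s) * (((n:ℕ):ℝ)^2)⁻¹ := by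
          refine Summable.tsum_le_tsum hb ?_ (summable_aux s (by positivity))
          exact Summable.of_nonneg_of_le hnn hb (summable_aux s (by positivity))
      _ = ((3/4:ℝ)^s) * (Real.pi^2/6) := (hasSum_inv_sq_pnat.mul_left _).tsum_eq
      _ ≤ ((3/4:ℝ)^s) * 2 := by
          have h34 : (0:ℝ) ≤ (3/4:ℝ)^s := by positivity
          have hpi2 : Real.pi^2/6 ≤ 2 := by nlinarith [Real.pi_lt_d2, Real.pi_pos]
          exact mul_le_mul_of_nonneg_left hpi2 h34
      _ = 2 * (3/4:ℝ)^s := by ring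




/-- ζ*(3, {2}^∞) = 2ζ(2) − 2 = π²/3 − 2. -/
theorem stmt14 :
    Filter.Tendsto
      (fun s : ℕ => zetaStar (fun i : Fin (s + 1) =>
        if (i : ℕ) = 0 then 3 else 2))
      Filter.atTop
      (nhds (Real.pi ^ 2 / 3 - 2)) := by
  have hlow : Filter.Tendsto (fun s : ℕ => (Real.pi^2/3 - 2) - 2 * (3/4:ℝ)^s)
      Filter.atTop (nhds (Real.pi ^ 2 / 3 - 2)) := by
    have : Filter.Tendsto (fun s : ℕ => (3/4:ℝ)^s) Filter.atTop (nhds 0) :=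
      tendsto_pow_atTop_nhds_zero_of_lt_one (by norm_num) (by norm_num)
    simpa using Filter.Tendsto.const_sub (Real.pi^2/3 - 2) (this.const_mul 2)
  refine tendsto_of_tendsto_of_tendsto_of_le_of_le hlow tendsto_const_nhds (fun s => ?_) (fun s => ?_)
  · rw [zetaStar_sub s]
    linarith [(D_bounds s).2]
  · rw [zetaStar_sub s]
    linarith [(D_bounds s).1]
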